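/- Let (X, d_X) and (Y, d_Y) be nonempty compact metric spaces and ε > 0. If d_GH(X, Y) ≤ ε, then Cov(3ε, Y) ≤ Cov(ε, X). -/

import Mathlib

/-- `covNum ε X` is the smallest number of open balls of radius `ε` whose union is `X`. -/
noncomputable def covNum (ε : ℝ) (X : Type*) [MetricSpace X] : ℕ :=
  sInf {k : ℕ | ∃ c : Fin k → X, ∀ p : X, ∃ i, p ∈ Metric.ball (c i) ε}

/-- If `d_GH(X, Y) ≤ ε` for nonempty compact metric spaces `X`, `Y`, then
`Cov(3ε, Y) ≤ Cov(ε, X)`. -/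
theorem covNum_le_covNum_of_ghDist_le {X : Type*} {Y : Type*} [MetricSpace X] [MetricSpace Y]
    [CompactSpace X] [CompactSpace Y] [Nonempty X] [Nonempty Y]
    (ε : ℝ) (hε : 0 < ε) (hGH : GromovHausdorff.ghDist X Y ≤ ε) :
    covNum (3 * ε) Y ≤ covNum ε X := by
  classical
  -- The set defining covNum ε X is nonempty
  obtain ⟨t, -, htfin, htcov⟩ := finite_cover_balls_of_compact (isCompact_univ : IsCompact (Set.univ : Set X)) hε
  have hne : {k : ℕ | ∃ c : Fin k → X, ∀ p : X, ∃ i, p ∈ Metric.ball (c i) ε}.Nonempty := by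
    have : ∀ p : X, ∃ x ∈ t, p ∈ Metric.ball x ε := by
      intro p
      have := htcov (Set.mem_univ p)
      simpa using this
    refine ⟨htfin.toFinset.card, fun i => (htfin.toFinset.equivFin.symm i : X), fun p => ?_⟩
    obtain ⟨x, hx, hpx⟩ := this p
    have hx' : x ∈ htfin.toFinset := htfin.mem_toFinset.2 hx
    refine ⟨htfin.toFinset.equivFin ⟨x, hx'⟩, ?_⟩
    simpa using hpx
  -- extract an optimal cover of X
  have hmem := Nat.sInf_mem hne
  set k := covNum ε X with hk
  obtain ⟨c, hc⟩ : ∃ c : Fin k → X, ∀ p : X, ∃ i, p ∈ Metric.ball (c i) ε := hmem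
  -- optimal coupling
  set Φ := GromovHausdorff.optimalGHInjl X Y
  set Ψ := GromovHausdorff.optimalGHInjr X Y
  have hΦ : Isometry Φ := GromovHausdorff.isometry_optimalGHInjl X Y
  have hΨ : Isometry Ψ := GromovHausdorff.isometry_optimalGHInjr X Y
  have hHD : Metric.hausdorffDist (Set.range Φ) (Set.range Ψ) ≤ ε := by
    rw [GromovHausdorff.hausdorffDist_optimal]; exact hGH
  have hcΨ : IsCompact (Set.range Ψ) := by
    simpa [Set.image_univ] using isCompact_univ.image hΨ.continuous
  have hcΦ' : IsCompact (Set.range Φ) := by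
    simpa [Set.image_univ] using isCompact_univ.image hΦ.continuous
  have hneΦ : (Set.range Φ).Nonempty := Set.range_nonempty _
  have hneΨ : (Set.range Ψ).Nonempty := Set.range_nonempty _
  have hfin : EMetric.hausdorffEdist (Set.range Φ) (Set.range Ψ) ≠ ⊤ :=
    Metric.hausdorffEdist_ne_top_of_nonempty_of_bounded hneΦ hneΨ
      hcΦ'.isBounded hcΨ.isBounded
  -- pick for each i a point y i close to Φ (c i)
  have hpick : ∀ x : X, ∃ y : Y, dist (Φ x) (Ψ y) ≤ ε := by
    intro x
    obtain ⟨z, hz, hzd⟩ := hcΨ.exists_infDist_eq_dist hneΨ (Φ x)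
    obtain ⟨y, rfl⟩ := hz
    refine ⟨y, ?_⟩
    rw [← hzd]
    exact le_trans (Metric.infDist_le_hausdorffDist_of_mem (Set.mem_range_self x) hfin) hHD
  choose y hy using hpick
  -- show that (y ∘ c) covers Y with radius 3ε
  apply Nat.sInf_le
  refine ⟨fun i => y (c i), fun p => ?_⟩
  -- find x close to Ψ p
  obtain ⟨z, hz, hzd⟩ := hcΦ'.exists_infDist_eq_dist hneΦ (Ψ p)
  obtain ⟨x, rfl⟩ := hz
  have hxp : dist (Ψ p) (Φ x) ≤ ε := by
    rw [← hzd]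
    exact le_trans (Metric.infDist_le_hausdorffDist_of_mem (Set.mem_range_self p)
      (by rw [EMetric.hausdorffEdist_comm]; exact hfin)) (by rwa [Metric.hausdorffDist_comm])
  obtain ⟨i, hi⟩ := hc x
  refine ⟨i, ?_⟩
  have h1 : dist (Φ x) (Φ (c i)) < ε := by
    rw [hΦ.dist_eq]; simpa [Metric.mem_ball, dist_comm] using hi
  have h2 : dist (Ψ p) (Ψ (y (c i))) < 3 * ε := by
    calc dist (Ψ p) (Ψ (y (c i)))
        ≤ dist (Ψ p) (Φ x) + dist (Φ x) (Φ (c i)) + dist (Φ (c i)) (Ψ (y (c i))) :=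
          dist_triangle4 _ _ _ _
      _ < ε + ε + ε := by
          have := hy (c i)
          linarith
      _ = 3 * ε := by ring
  rw [Metric.mem_ball, ← hΨ.dist_eq]
  exact h2
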